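/- Let a, b be real numbers with b > 0 and a < 0, and for x ∈ (0,1) define φ(x) = ln x + ln(1-x) + (1/2)·ln((x-a)² + b²). Then φ''(x) < 0 for all x ∈ (0,1). -/

import Mathlib

open Real

theorem stmt_9 (a b : ℝ) (hb : 0 < b) (ha : a < 0)
    (φ : ℝ → ℝ)
    (hφ : ∀ x, φ x = Real.log x + Real.log (1 - x) + (1/2) * Real.log ((x - a) ^ 2 + b ^ 2)) :
    ∀ x ∈ Set.Ioo (0 : ℝ) 1, deriv (deriv φ) x < 0 := by
  set ψ : ℝ → ℝ := fun y => y⁻¹ - (1 - y)⁻¹ + (y - a) / ((y - a) ^ 2 + b ^ 2) with hψ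
  have hgpos : ∀ y : ℝ, (0:ℝ) < (y - a) ^ 2 + b ^ 2 := by
    intro y; positivity
  have hder : ∀ y ∈ Set.Ioo (0:ℝ) 1, HasDerivAt φ (ψ y) y := by
    intro y hy
    obtain ⟨hy0, hy1⟩ := hy
    have h1y : (0:ℝ) < 1 - y := by linarith
    have h1 : HasDerivAt Real.log y⁻¹ y := Real.hasDerivAt_log hy0.ne'
    have hsub : HasDerivAt (fun x : ℝ => 1 - x) (-1) y := by
      simpa using (hasDerivAt_id y).const_sub 1
    have h2 : HasDerivAt (fun x : ℝ => Real.log (1 - x)) ((1 - y)⁻¹ * (-1)) y :=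
      (Real.hasDerivAt_log h1y.ne').comp y hsub
    have hg : HasDerivAt (fun x : ℝ => (x - a) ^ 2 + b ^ 2) (2 * (y - a)) y := by
      have := (((hasDerivAt_id y).sub_const a).pow 2).add_const (b ^ 2)
      simpa [mul_comm] using this
    have h3 : HasDerivAt (fun x : ℝ => Real.log ((x - a) ^ 2 + b ^ 2))
        (((y - a) ^ 2 + b ^ 2)⁻¹ * (2 * (y - a))) y :=
      by have := (Real.hasDerivAt_log (hgpos y).ne').comp y hg; exact this
    have h : HasDerivAt φ
        (y⁻¹ + (1 - y)⁻¹ * (-1) + (1/2) * (((y - a) ^ 2 + b ^ 2)⁻¹ * (2 * (y - a)))) y := by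
      have heq : φ = fun x => Real.log x + Real.log (1 - x) +
          (1/2) * Real.log ((x - a) ^ 2 + b ^ 2) := funext hφ
      rw [heq]
      exact (h1.add h2).add (h3.const_mul (1/2))
    convert h using 1
    simp only [hψ]
    rw [div_eq_mul_inv]
    ring
  intro x hx
  obtain ⟨hx0, hx1⟩ := hx
  have h1x : (0:ℝ) < 1 - x := by linarith
  -- deriv φ = ψ near x
  have hev : deriv φ =ᶠ[nhds x] ψ := by
    filter_upwards [isOpen_Ioo.mem_nhds (⟨hx0, hx1⟩ : x ∈ Set.Ioo (0:ℝ) 1)] with y hy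
    exact (hder y hy).deriv
  rw [Filter.EventuallyEq.deriv_eq hev]
  -- second derivative of ψ
  set g : ℝ := (x - a) ^ 2 + b ^ 2 with hgdef
  have hgx : (0:ℝ) < g := hgpos x
  have hinv1 : HasDerivAt (fun y : ℝ => y⁻¹) (-(x ^ 2)⁻¹) x := hasDerivAt_inv hx0.ne'
  have hsub : HasDerivAt (fun y : ℝ => 1 - y) (-1) x := by
    simpa using (hasDerivAt_id x).const_sub 1
  have hinv2 : HasDerivAt (fun y : ℝ => (1 - y)⁻¹) (-((1 - x) ^ 2)⁻¹ * (-1)) x :=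
    (hasDerivAt_inv h1x.ne').comp x hsub
  have hnum : HasDerivAt (fun y : ℝ => y - a) 1 x := (hasDerivAt_id x).sub_const a
  have hgder : HasDerivAt (fun y : ℝ => (y - a) ^ 2 + b ^ 2) (2 * (x - a)) x := by
    have := (((hasDerivAt_id x).sub_const a).pow 2).add_const (b ^ 2)
    simpa [mul_comm] using this
  have hdiv : HasDerivAt (fun y : ℝ => (y - a) / ((y - a) ^ 2 + b ^ 2))
      ((1 * g - (x - a) * (2 * (x - a))) / g ^ 2) x :=
    hnum.div hgder hgx.ne'
  have hψd : HasDerivAt ψ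
      (-(x ^ 2)⁻¹ - -((1 - x) ^ 2)⁻¹ * (-1) + (1 * g - (x - a) * (2 * (x - a))) / g ^ 2) x :=
    (hinv1.sub hinv2).add hdiv
  rw [hψd.deriv]
  -- now prove the expression is negative
  have hu : x < x - a := by linarith
  have hx2 : x ^ 2 < (x - a) ^ 2 := by nlinarith
  have hxg : x ^ 2 < g := by rw [hgdef]; nlinarith
  have key : (1 * g - (x - a) * (2 * (x - a))) / g ^ 2 < (x ^ 2)⁻¹ := by
    rw [← one_div, div_lt_div_iff₀ (by positivity) (by positivity)]
    have hle : g - 2 * (x - a) ^ 2 ≤ g := by nlinarith [sq_nonneg (x - a)]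
    nlinarith [mul_le_mul_of_nonneg_right hle (sq_nonneg x),
      mul_lt_mul_of_pos_left hxg hgx]
  have hpos2 : (0:ℝ) < ((1 - x) ^ 2)⁻¹ := by positivity
  have : -((1 - x) ^ 2)⁻¹ * (-1) = ((1 - x) ^ 2)⁻¹ := by ring
  rw [this]
  linarith
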